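/- Let φ be a nontrivial δ-derivation of V = V_{1/2}(Z,D), i.e. δ ∉ {0,1} and φ does not belong to the centroid of V. Then δ = 1/2 and there exists z ∈ Z with z ∉ F·1 (equivalently, D(z) ≠ 0) such that φ(a,b) = (za, zb) for all (a,b) ∈ V. -/

import Mathlib

/-- The product of the Jordan superalgebra `V_{1/2}(Z,D)` on `Z × Z`
(even part `Z × 0`, odd part `0 × Z`):
`(a,b)·(c,d) = (ac + D(b)d − bD(d), (1/2)(ad + bc))`. -/
def vmul {F : Type*} [Field F] {Z : Type*} [CommRing Z] [Algebra F Z]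
    (D : Z →ₗ[F] Z) (x y : Z × Z) : Z × Z :=
  (x.1 * y.1 + D x.2 * y.2 - x.2 * D y.2, (1 / 2 : F) • (x.1 * y.2 + x.2 * y.1))

/-- `φ` is an odd `δ`-superderivation of `V_{1/2}(Z,D)`: it interchanges the even and the
odd part, and for homogeneous `x, y` it satisfies
`φ(x·y) = δ(φ(x)·y + (−1)^{p(x)} x·φ(y))`. -/
def IsOddSuperDer {F : Type*} [Field F] {Z : Type*} [CommRing Z] [Algebra F Z]
    (D : Z →ₗ[F] Z) (δ : F) (φ : Z × Z → Z × Z) : Prop :=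
  (∀ a : Z, (φ (a, 0)).1 = 0) ∧ (∀ b : Z, (φ (0, b)).2 = 0) ∧
  (∀ x y : Z × Z, x.2 = 0 → (y.1 = 0 ∨ y.2 = 0) →
    φ (vmul D x y) = δ • (vmul D (φ x) y + vmul D x (φ y))) ∧
  (∀ x y : Z × Z, x.1 = 0 → (y.1 = 0 ∨ y.2 = 0) →
    φ (vmul D x y) = δ • (vmul D (φ x) y - vmul D x (φ y)))

/-- `χ` lies in the centroid of `V_{1/2}(Z,D)`:
`χ(x·y) = χ(x)·y = x·χ(y)` for all `x, y`. -/
def InCentroid {F : Type*} [Field F] {Z : Type*} [CommRing Z] [Algebra F Z]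
    (D : Z →ₗ[F] Z) (χ : Z × Z → Z × Z) : Prop :=
  ∀ x y : Z × Z, χ (vmul D x y) = vmul D (χ x) y ∧ χ (vmul D x y) = vmul D x (χ y)

/-- `χ` lies in the odd part of the supercentroid of `V_{1/2}(Z,D)`: it is odd and
`χ(x·y) = χ(x)·y = (−1)^{p(x)} x·χ(y)` for all homogeneous `x, y`. -/
def InOddSupercentroid {F : Type*} [Field F] {Z : Type*} [CommRing Z] [Algebra F Z]
    (D : Z →ₗ[F] Z) (χ : Z × Z → Z × Z) : Prop :=
  (∀ a : Z, (χ (a, 0)).1 = 0) ∧ (∀ b : Z, (χ (0, b)).2 = 0) ∧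
  (∀ x y : Z × Z, (x.1 = 0 ∨ x.2 = 0) → (y.1 = 0 ∨ y.2 = 0) →
    χ (vmul D x y) = vmul D (χ x) y) ∧
  (∀ x y : Z × Z, x.2 = 0 → (y.1 = 0 ∨ y.2 = 0) →
    χ (vmul D x y) = vmul D x (χ y)) ∧
  (∀ x y : Z × Z, x.1 = 0 → (y.1 = 0 ∨ y.2 = 0) →
    χ (vmul D x y) = - vmul D x (χ y))

/-- (char F ≠ 2)  A nontrivial `δ`-derivation `φ` of `V_{1/2}(Z,D)` (i.e. `δ ∉ {0,1}`
and `φ` is not in the centroid) occurs only for `δ = 1/2`, and then `φ(a,b) = (za, zb)`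
for some fixed `z ∈ Z` with `z ∉ F·1` (equivalently, `D z ≠ 0`). -/
theorem nontrivial_delta_derivation_of_V
    {F : Type*} [Field F] (h2 : (2 : F) ≠ 0)
    {Z : Type*} [CommRing Z] [Algebra F Z]
(D : Z →ₗ[F] Z)
    (hD : ∀ a b : Z, D (a * b) = D a * b + a * D b)
    (hD0 : D ≠ 0)
    (hsimple : ∀ I : Ideal Z, (∀ x ∈ I, D x ∈ I) → I = ⊥ ∨ I = ⊤)
    (hker : ∀ a : Z, D a = 0 → ∃ c : F, a = algebraMap F Z c)
    (δ : F) (hδ0 : δ ≠ 0) (hδ1 : δ ≠ 1)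
    (φ : Z × Z →ₗ[F] Z × Z)
    (hder : ∀ x y : Z × Z, φ (vmul D x y) = δ • (vmul D (φ x) y + vmul D x (φ y)))
    (hnt : ¬ InCentroid D ⇑φ) :
    δ = 1 / 2 ∧
    ∃ z : Z, (∀ c : F, z ≠ algebraMap F Z c) ∧ D z ≠ 0 ∧
      ∀ a b : Z, φ (a, b) = (z * a, z * b) := by
  classical
  have hinv : (2⁻¹ : F) ≠ 0 := inv_ne_zero h2
  have hD1 : D 1 = 0 := by have h := hD 1 1; simpa using h
  -- scalar cancellation helpers
  have hcs : ∀ (c : F) (z : Z), c ≠ 0 → c • z = 0 → z = 0 := by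
    intro c z hc h
    have h' := congrArg (fun t => c⁻¹ • t) h
    simpa [smul_smul, inv_mul_cancel₀ hc] using h'
  have hcs' : ∀ (c : F) (x y : Z), c ≠ 0 → c • x = c • y → x = y := by
    intro c x y hc h
    have h0 : c • (x - y) = 0 := by rw [smul_sub, h, sub_self]
    exact sub_eq_zero.mp (hcs c _ hc h0)
  have hsolve : ∀ (c : F) (z : Z), c ≠ 1 → z = c • z → z = 0 := by
    intro c z hc h
    refine hcs (1 - c) z (sub_ne_zero.mpr (Ne.symm hc)) ?_
    rw [sub_smul, one_smul, ← h, sub_self]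
  have dbl : ∀ z : Z, (2 : F) • (2⁻¹ : F) • z = z := by
    intro z; rw [smul_smul, mul_inv_cancel₀ h2, one_smul]
  have cancel_half : ∀ x y : Z, x = (2⁻¹ : F) • x + (2⁻¹ : F) • y → x = y := by
    intro x y h
    have h' := congrArg (fun t => (2 : F) • t) h
    simp only [smul_add, dbl] at h'
    have h'' : x + x = x + y := by rw [two_smul] at h'; exact h'
    exact add_left_cancel h''
  obtain ⟨w, hw⟩ : ∃ w, D w ≠ 0 := by
    by_contra h
    push_neg at h
    exact hD0 (LinearMap.ext fun x => by simp [h x])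
  have hφ2 : ∀ (c : F) (z : Z), φ (0, c • z) = c • φ (0, z) := by
    intro c z; rw [show (((0:Z), c • z) : Z × Z) = c • ((0:Z), z) by simp, map_smul]
  have hφ1 : ∀ (c : F) (z : Z), φ (c • z, 0) = c • φ (z, 0) := by
    intro c z; rw [show ((c • z, (0:Z)) : Z × Z) = c • (z, (0:Z)) by simp, map_smul]
  -- s := (φ (1,0)).2 vanishes
  have halfsum : ∀ (c : F) (z : Z), c • (2⁻¹ : F) • z + c • (2⁻¹ : F) • z = c • z := by
    intro c z
    rw [smul_smul, ← add_smul]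
    congr 1
    field_simp
    ring
  have hs : (φ ((1:Z), (0:Z))).2 = 0 := by
    have h := hder (1,0) (1,0)
    simp [vmul, hD1, Prod.ext_iff] at h
    exact hsolve δ _ hδ1 (h.2.trans (halfsum δ _))
  -- B := (φ (a,0)).2 vanishes
  have hB : ∀ a : Z, (φ (a, (0:Z))).2 = 0 := by
    have key : ∀ a b : Z, D ((φ (a,(0:Z))).2) * b = (φ (a,(0:Z))).2 * D b := by
      intro a b
      have h3 := hder (a,0) (0,b)
      simp [vmul, hD1, Prod.ext_iff, hφ2, hφ1] at h3
      have h4 := hder (0,b) (a,0)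
      simp [vmul, hD1, Prod.ext_iff, hφ2, hφ1] at h4
      rw [mul_comm b a] at h4
      have e : δ • (D (φ (a, 0)).2 * b - (φ (a, 0)).2 * D b) + δ • (a * (φ (0, b)).1)
          = δ • ((φ (0, b)).1 * a) + δ • (D b * (φ (a, 0)).2 - b * D (φ (a, 0)).2) := by
        rw [← h3.1, ← h4.1]
      have e0 : δ • ((D (φ (a, 0)).2 * b - (φ (a, 0)).2 * D b) + (a * (φ (0, b)).1)
          - (((φ (0, b)).1 * a) + (D b * (φ (a, 0)).2 - b * D (φ (a, 0)).2))) = 0 := by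
        rw [smul_sub, smul_add, smul_add, e, sub_self]
      have e1 := hcs δ _ hδ0 e0
      have e2 : (2 : F) • (D ((φ (a,(0:Z))).2) * b - (φ (a,(0:Z))).2 * D b) = 0 := by
        rw [two_smul]
        linear_combination e1
      exact sub_eq_zero.mp (hcs (2:F) _ h2 e2)
    intro a
    have hD2 : D ((φ (a,(0:Z))).2) = 0 := by
      have := key a 1; rwa [mul_one, hD1, mul_zero] at this
    obtain ⟨c, hc⟩ := hker _ hD2
    have hz : (algebraMap F Z c) * D w = 0 := by
      have := key a w
      rw [hD2, zero_mul, hc] at this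
      exact this.symm
    rcases eq_or_ne c 0 with h | h
    · rw [hc, h, map_zero]
    · exfalso
      apply hw
      have : c • D w = 0 := by rwa [Algebra.smul_def]
      exact hcs c _ h this
  -- t := (φ (0,1)).1 vanishes
  have ht : (φ ((0:Z), (1:Z))).1 = 0 := by
    have h7 := hder (0,1) (0,1)
    simp [vmul, hD1, Prod.ext_iff, hφ2, hφ1] at h7
    exact hcs δ _ hδ0 ((halfsum δ _).symm.trans (by simpa [Prod.mk_zero_zero, eq_comm] using h7))
  -- C := (φ (0,b)).1 vanishes
  have hC : ∀ b : Z, (φ ((0:Z), b)).1 = 0 := by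
    intro b
    have h3 := hder (b,0) (0,1)
    simp [vmul, hD1, hB, ht, Prod.ext_iff, hφ2, hφ1] at h3
    exact h3.1.resolve_left h2
  -- main equations from multiplying by the even unit
  have h5 : ∀ a : Z, (φ (a,(0:Z))).1 = δ • (φ (a,(0:Z))).1 + δ • (a * (φ ((1:Z),(0:Z))).1) := by
    intro a
    have h := hder (a,0) (1,0)
    simp [vmul, hD1, hs, hB, Prod.ext_iff, hφ2, hφ1] at h
    exact h
  have h6 : ∀ b : Z, (2⁻¹ : F) • (φ ((0:Z), b)).2
      = δ • (2⁻¹ : F) • (φ ((0:Z), b)).2 + δ • (2⁻¹ : F) • (b * (φ ((1:Z),(0:Z))).1) := by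
    intro b
    have h := hder (0,b) (1,0)
    simp [vmul, hD1, hs, hC, Prod.ext_iff, hφ2, hφ1] at h
    exact h
  by_cases hδ : δ = 1 / 2
  · -- the interesting case: δ = 1/2
    have hδ' : δ = (2⁻¹ : F) := by rw [hδ, one_div]
    set r := (φ ((1:Z),(0:Z))).1 with hrdef
    have hA : ∀ a : Z, (φ (a,(0:Z))).1 = r * a := by
      intro a
      have h := h5 a
      rw [hδ'] at h
      rw [cancel_half _ _ h, mul_comm]
    have hE : ∀ b : Z, (φ ((0:Z), b)).2 = r * b := by
      intro b
      have h := h6 b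
      rw [hδ'] at h
      have h' := cancel_half _ _ h
      rw [hcs' _ _ _ hinv h', mul_comm]
    have hφ : ∀ a b : Z, φ (a, b) = (r * a, r * b) := by
      intro a b
      have hab : ((a, b) : Z × Z) = (a, 0) + (0, b) := by simp
      rw [hab, map_add, Prod.ext_iff]
      constructor
      · show (φ (a,(0:Z))).1 + (φ ((0:Z), b)).1 = r * a
        rw [hA, hC, add_zero]
      · show (φ (a,(0:Z))).2 + (φ ((0:Z), b)).2 = r * b
        rw [hB, hE, zero_add]
    have hDr : D r ≠ 0 := by
      intro hDr0
      apply hnt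
      intro x y
      obtain ⟨x1, x2⟩ := x
      obtain ⟨y1, y2⟩ := y
      constructor
      · simp only [vmul, hφ, Prod.ext_iff]
        constructor
        · simp only [hD, hDr0, zero_mul, zero_add]
          ring
        · simp only [Algebra.smul_def]
          ring
      · simp only [vmul, hφ, Prod.ext_iff]
        constructor
        · simp only [hD, hDr0, zero_mul, zero_add]
          ring
        · simp only [Algebra.smul_def]
          ring
    refine ⟨hδ, r, ?_, hDr, hφ⟩
    intro c hcc
    apply hDr
    rw [hcc, Algebra.algebraMap_eq_smul_one, map_smul, hD1, smul_zero]
  · -- trivial case: φ = 0, contradiction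
    exfalso
    have hδ' : δ + δ ≠ 1 := by
      intro h
      apply hδ
      field_simp
      linear_combination h
    have hr : (φ ((1:Z),(0:Z))).1 = 0 := by
      refine hsolve (δ + δ) _ hδ' ?_
      have h := h5 1
      rw [one_mul] at h
      rw [add_smul]
      exact h
    have hA : ∀ a : Z, (φ (a,(0:Z))).1 = 0 := by
      intro a
      refine hsolve δ _ hδ1 ?_
      have h := h5 a
      simp only [hr, mul_zero, smul_zero, add_zero] at h
      exact h
    have hE : ∀ b : Z, (φ ((0:Z), b)).2 = 0 := by
      intro b
      refine hcs _ _ hinv (hsolve δ _ hδ1 ?_)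
      have h := h6 b
      simp only [hr, mul_zero, smul_zero, add_zero] at h
      exact h
    have hzero : ∀ v : Z × Z, φ v = 0 := by
      intro v
      have hv : v = ((v.1, (0:Z)) : Z × Z) + ((0:Z), v.2) := by simp
      rw [hv, map_add]
      have e1 : φ (v.1, (0:Z)) = 0 := by
        rw [Prod.ext_iff]; exact ⟨hA v.1, hB v.1⟩
      have e2 : φ ((0:Z), v.2) = 0 := by
        rw [Prod.ext_iff]; exact ⟨hC v.2, hE v.2⟩
      rw [e1, e2, add_zero]
    exact hnt fun x y => by
      constructor <;> simp [vmul, hzero, Prod.mk_zero_zero]
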